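/- Per-measurement domination of the variational mean-field free entropy by the variational Bethe free entropy for the AWGN channel: for all real numbers Δ > 0, V ≥ 0, c ≥ 0 and a ∈ ℝ, −a²/(2(Δ + c)) − ½ log(2π(Δ + V)) ≥ −(a² + V)/(2Δ) − ½ log(2πΔ). Consequently, summing over all measurements, the AWGN variational Bethe free entropy Φ^Bethe_AWGN is greater than or equal to the variational mean-field free entropy Φ^VMF_AWGN evaluated at the same point. -/

import Mathlib

/-- Per-measurement domination of the variational mean-field free entropy by the
variational Bethe free entropy for the AWGN output channel, together with the summed
consequence `Φ^Bethe_AWGN ≥ Φ^VMF_AWGN`. -/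
theorem awgn_bethe_dominates_vmf (Δ : ℝ) (hΔ : 0 < Δ) :
    (∀ (V c a : ℝ), 0 ≤ V → 0 ≤ c →
      -(a ^ 2) / (2 * (Δ + c)) - (1 / 2) * Real.log (2 * Real.pi * (Δ + V)) ≥
        -(a ^ 2 + V) / (2 * Δ) - (1 / 2) * Real.log (2 * Real.pi * Δ)) ∧
    (∀ (ι : Type) (sfin : Finset ι) (V c a : ι → ℝ),
      (∀ i ∈ sfin, 0 ≤ V i) → (∀ i ∈ sfin, 0 ≤ c i) →
      ∑ i ∈ sfin,
          (-(a i ^ 2) / (2 * (Δ + c i)) - (1 / 2) * Real.log (2 * Real.pi * (Δ + V i))) ≥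
        ∑ i ∈ sfin,
          (-(a i ^ 2 + V i) / (2 * Δ) - (1 / 2) * Real.log (2 * Real.pi * Δ))) := by
  have key : ∀ (V c a : ℝ), 0 ≤ V → 0 ≤ c →
      -(a ^ 2) / (2 * (Δ + c)) - (1 / 2) * Real.log (2 * Real.pi * (Δ + V)) ≥
        -(a ^ 2 + V) / (2 * Δ) - (1 / 2) * Real.log (2 * Real.pi * Δ) := by
    intro V c a hV hc
    have hπ : (0:ℝ) < 2 * Real.pi := by positivity
    have hΔV : (0:ℝ) < Δ + V := by linarith
    have hΔc : (0:ℝ) < Δ + c := by linarith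
    have hx : (0:ℝ) < (Δ + V) / Δ := by positivity
    have hlog : Real.log ((Δ + V) / Δ) ≤ (Δ + V) / Δ - 1 :=
      Real.log_le_sub_one_of_pos hx
    have hldiff : Real.log (2 * Real.pi * (Δ + V)) - Real.log (2 * Real.pi * Δ)
        = Real.log ((Δ + V) / Δ) := by
      rw [← Real.log_div (by positivity) (by positivity)]
      congr 1
      field_simp
    have hsub : (Δ + V) / Δ - 1 = V / Δ := by field_simp; ring
    have hlog2 : Real.log (2 * Real.pi * (Δ + V)) - Real.log (2 * Real.pi * Δ) ≤ V / Δ := by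
      rw [hldiff, ← hsub]; exact hlog
    have hVdiv : V / Δ ≤ V / Δ := le_refl _
    have hfrac : a ^ 2 / (2 * (Δ + c)) ≤ a ^ 2 / (2 * Δ) := by
      apply div_le_div_of_nonneg_left (sq_nonneg a) (by linarith) (by linarith)
    have hVΔ : V / Δ = V / (2 * Δ) * 2 := by field_simp
    have h1 : -(a ^ 2) / (2 * (Δ + c)) = -(a ^ 2 / (2 * (Δ + c))) := by ring
    have h2 : -(a ^ 2 + V) / (2 * Δ) = -(a ^ 2 / (2 * Δ)) - V / (2 * Δ) := by ring
    rw [ge_iff_le, h1, h2]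
    nlinarith [hlog2, hfrac]
  refine ⟨key, ?_⟩
  intro ι sfin V c a hV hc
  exact Finset.sum_le_sum fun i hi => key (V i) (c i) (a i) (hV i hi) (hc i hi)
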